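/- Let G be an 8-contraction-critical graph with no K_7 minor, and let v be a vertex of degree 9 in G. Then the subgraph induced on N(v) contains a triangle (K_3). -/

import Mathlib

/-- `MinorOf H G` means `H` is a minor of `G`: there are nonempty, pairwise disjoint,
connected branch sets in `G`, one for each vertex of `H`, with an edge of `G` between the
branch sets of any two adjacent vertices of `H`. -/
def MinorOf {W V : Type} (H : SimpleGraph W) (G : SimpleGraph V) : Prop :=
  ∃ f : W → Set V,
    (∀ w, (f w).Nonempty) ∧
    (∀ w, (G.induce (f w)).Connected) ∧
    (Pairwise fun w w' => Disjoint (f w) (f w')) ∧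
    (∀ w w', H.Adj w w' → ∃ v ∈ f w, ∃ v' ∈ f w', G.Adj v v')

/-- A graph `G` is `k`-contraction-critical if its chromatic number is `k` but every
proper minor of `G` (a minor not isomorphic to `G`) is `(k-1)`-colorable. -/
def ContractionCritical (k : ℕ) {V : Type} [Fintype V] (G : SimpleGraph V) : Prop :=
  G.chromaticNumber = k ∧
  ∀ (W : Type) (_ : Fintype W) (H : SimpleGraph W),
    MinorOf H G → IsEmpty (H ≃g G) → H.Colorable (k - 1)

open Finset

lemma indep3 {α : Type} [Fintype α] (G : SimpleGraph α) (M : Finset α)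
    (hM : 6 ≤ M.card) (h3 : G.CliqueFree 3) :
    ∃ s : Finset α, s ⊆ M ∧ s.card = 3 ∧ ∀ a ∈ s, ∀ b ∈ s, a ≠ b → ¬ G.Adj a b := by
  classical
  obtain ⟨v, hvM⟩ : M.Nonempty := Finset.card_pos.1 (by omega)
  set N := M.filter (fun x => G.Adj v x) with hN
  set P := M.filter (fun x => x ≠ v ∧ ¬ G.Adj v x) with hP
  have hcard : N.card + P.card + 1 ≥ 6 := by
    have : M ⊆ insert v (N ∪ P) := by
      intro x hx
      by_cases hxv : x = v
      · simp [hxv]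
      · by_cases ha : G.Adj v x
        · simp [hN, hx, ha]
        · simp [hP, hx, ha, hxv]
    have := Finset.card_le_card this
    have h2 := Finset.card_insert_le v (N ∪ P)
    have h3 := Finset.card_union_le N P
    omega
  by_cases hN3 : 3 ≤ N.card
  · obtain ⟨s, hsN, hs3⟩ := Finset.exists_subset_card_eq hN3
    refine ⟨s, fun x hx => (Finset.mem_filter.1 (hsN hx)).1, hs3, ?_⟩
    intro a ha b hb hab hadj
    have hva : G.Adj v a := (Finset.mem_filter.1 (hsN ha)).2
    have hvb : G.Adj v b := (Finset.mem_filter.1 (hsN hb)).2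
    exact h3 {v, a, b} (SimpleGraph.is3Clique_triple_iff.2 ⟨hva, hvb, hadj⟩)
  · have hP3 : 3 ≤ P.card := by omega
    obtain ⟨s, hsP, hs3⟩ := Finset.exists_subset_card_eq hP3
    obtain ⟨a, b, c, hab, hac, hbc, hsabc⟩ := Finset.card_eq_three.1 hs3
    have haP := Finset.mem_filter.1 (hsP (by simp [hsabc] : a ∈ s))
    have hbP := Finset.mem_filter.1 (hsP (by simp [hsabc] : b ∈ s))
    have hcP := Finset.mem_filter.1 (hsP (by simp [hsabc] : c ∈ s))
    by_cases h1 : G.Adj a b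
    · by_cases h2 : G.Adj a c
      · by_cases h4 : G.Adj b c
        · exact absurd (SimpleGraph.is3Clique_triple_iff.2 ⟨h1, h2, h4⟩) (h3 _)
        · refine ⟨{v, b, c}, ?_, ?_, ?_⟩
          · intro x hx; simp only [Finset.mem_insert, Finset.mem_singleton] at hx
            rcases hx with rfl|rfl|rfl
            exacts [hvM, hbP.1, hcP.1]
          · rw [Finset.card_insert_of_notMem (by simp [Ne.symm hbP.2.1, Ne.symm hcP.2.1]),
              Finset.card_insert_of_notMem (by simp [hbc]), Finset.card_singleton]
          · intro x hx y hy hxy hadj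
            simp only [Finset.mem_insert, Finset.mem_singleton] at hx hy
            rcases hx with rfl|rfl|rfl <;> rcases hy with rfl|rfl|rfl <;>
              first
                | exact hxy rfl
                | exact hbP.2.2 hadj | exact hcP.2.2 hadj
                | exact hbP.2.2 hadj.symm | exact hcP.2.2 hadj.symm
                | exact h4 hadj | exact h4 hadj.symm
      · refine ⟨{v, a, c}, ?_, ?_, ?_⟩
        · intro x hx; simp only [Finset.mem_insert, Finset.mem_singleton] at hx
          rcases hx with rfl|rfl|rfl
          exacts [hvM, haP.1, hcP.1]
        · rw [Finset.card_insert_of_notMem (by simp [Ne.symm haP.2.1, Ne.symm hcP.2.1]),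
            Finset.card_insert_of_notMem (by simp [hac]), Finset.card_singleton]
        · intro x hx y hy hxy hadj
          simp only [Finset.mem_insert, Finset.mem_singleton] at hx hy
          rcases hx with rfl|rfl|rfl <;> rcases hy with rfl|rfl|rfl <;>
            first
              | exact hxy rfl
              | exact haP.2.2 hadj | exact hcP.2.2 hadj
              | exact haP.2.2 hadj.symm | exact hcP.2.2 hadj.symm
              | exact h2 hadj | exact h2 hadj.symm
    · refine ⟨{v, a, b}, ?_, ?_, ?_⟩
      · intro x hx; simp only [Finset.mem_insert, Finset.mem_singleton] at hx
        rcases hx with rfl|rfl|rfl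
        exacts [hvM, haP.1, hbP.1]
      · rw [Finset.card_insert_of_notMem (by simp [Ne.symm haP.2.1, Ne.symm hbP.2.1]),
          Finset.card_insert_of_notMem (by simp [hab]), Finset.card_singleton]
      · intro x hx y hy hxy hadj
        simp only [Finset.mem_insert, Finset.mem_singleton] at hx hy
        rcases hx with rfl|rfl|rfl <;> rcases hy with rfl|rfl|rfl <;>
          first
            | exact hxy rfl
            | exact haP.2.2 hadj | exact hbP.2.2 hadj
            | exact haP.2.2 hadj.symm | exact hbP.2.2 hadj.symm
            | exact h1 hadj | exact h1 hadj.symm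

lemma indep4 {α : Type} [Fintype α] (G : SimpleGraph α)
    (h9 : Fintype.card α = 9) (h3 : G.CliqueFree 3) :
    ∃ s : Finset α, s.card = 4 ∧ ∀ a ∈ s, ∀ b ∈ s, a ≠ b → ¬ G.Adj a b := by
  classical
  by_contra hcon
  push_neg at hcon
  have hdeg : ∀ v : α, G.degree v = 3 := by
    intro v
    have hle : G.degree v ≤ 3 := by
      by_contra hgt
      push_neg at hgt
      obtain ⟨s, hsN, hs4⟩ := Finset.exists_subset_card_eq
        (show 4 ≤ (G.neighborFinset v).card by rwa [G.card_neighborFinset_eq_degree])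
      obtain ⟨a, ha, b, hb, hne, hadj⟩ := hcon s hs4
      exact h3 {v, a, b} (SimpleGraph.is3Clique_triple_iff.2
        ⟨(SimpleGraph.mem_neighborFinset _ _ _).1 (hsN ha),
         (SimpleGraph.mem_neighborFinset _ _ _).1 (hsN hb), hadj⟩)
    have hge : 3 ≤ G.degree v := by
      by_contra hlt
      push_neg at hlt
      set M := (univ : Finset α) \ insert v (G.neighborFinset v) with hM
      have hMcard : 6 ≤ M.card := by
        have h1 : M.card = 9 - (insert v (G.neighborFinset v)).card := by
          rw [hM, Finset.card_sdiff_of_subset (Finset.subset_univ _), Finset.card_univ, h9]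
        have h2 := Finset.card_insert_le v (G.neighborFinset v)
        rw [G.card_neighborFinset_eq_degree] at h2
        omega
      obtain ⟨s, hsM, hs3, hsind⟩ := indep3 G M hMcard h3
      have hvM : v ∉ M := by simp [hM]
      have hvs : v ∉ s := fun h => hvM (hsM h)
      obtain ⟨a, ha, b, hb, hne, hadj⟩ := hcon (insert v s)
        (by rw [Finset.card_insert_of_notMem hvs, hs3])
      simp only [Finset.mem_insert] at ha hb
      have hnadj : ∀ x ∈ s, ¬ G.Adj v x := by
        intro x hx
        have := hsM hx
        simp only [hM, Finset.mem_sdiff, Finset.mem_insert,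
          SimpleGraph.mem_neighborFinset] at this
        exact fun h => this.2 (Or.inr h)
      rcases ha with rfl|ha <;> rcases hb with rfl|hb
      · exact hne rfl
      · exact hnadj b hb hadj
      · exact hnadj a ha hadj.symm
      · exact hsind a ha b hb hne hadj
    omega
  have := G.sum_degrees_eq_twice_card_edges
  rw [Finset.sum_congr rfl (fun v _ => hdeg v), Finset.sum_const, Finset.card_univ, h9] at this
  simp only [smul_eq_mul] at this
  omega

/-- Let G be an 8-contraction-critical graph with no K₇ minor and let v be
a vertex of degree 9. Then the subgraph induced on N(v) contains a triangle. -/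
theorem stmt15 (V : Type) [Fintype V] (G : SimpleGraph V) [DecidableRel G.Adj]
    (hG : ContractionCritical 8 G)
    (hK7 : ¬ MinorOf (⊤ : SimpleGraph (Fin 7)) G)
    (v : V) (hv : G.degree v = 9) :
    ¬ (G.induce (G.neighborSet v)).CliqueFree 3 := by
  classical
  intro hcf
  have hcard : Fintype.card ↥(G.neighborSet v) = 9 := by
    rw [SimpleGraph.card_neighborSet_eq_degree]; exact hv
  obtain ⟨s, hs4, hsind⟩ := indep4 (G.induce (G.neighborSet v)) hcard hcf
  set I : Finset V := s.map ⟨Subtype.val, Subtype.val_injective⟩ with hIdef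
  have hI4 : I.card = 4 := by rw [hIdef, Finset.card_map]; exact hs4
  have hImem : ∀ x ∈ I, G.Adj v x := by
    intro x hx
    rw [hIdef, Finset.mem_map] at hx
    obtain ⟨⟨y, hy⟩, _, rfl⟩ := hx
    exact hy
  have hvI : v ∉ I := fun h => G.loopless.irrefl v (hImem v h)
  have hInon : ∀ a ∈ I, ∀ b ∈ I, a ≠ b → ¬ G.Adj a b := by
    intro a ha b hb hne hadj
    rw [hIdef, Finset.mem_map] at ha hb
    obtain ⟨⟨a', ha'⟩, has, rfl⟩ := ha
    obtain ⟨⟨b', hb'⟩, hbs, rfl⟩ := hb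
    exact hsind _ has _ hbs (fun h => hne (congrArg Subtype.val h)) hadj
  set S : Set V := insert v (↑I : Set V) with hSdef
  let W := {x : V // x ∉ I}
  haveI : Fintype W := Subtype.fintype _
  let vW : W := ⟨v, hvI⟩
  let f : W → Set V := fun w => if w = vW then S else {w.val}
  have hfv : f vW = S := if_pos rfl
  have hfn : ∀ w : W, w ≠ vW → f w = {(w.val : V)} := fun w h => if_neg h
  have hmemf : ∀ w : W, w.val ∈ f w := by
    intro w
    by_cases h : w = vW
    · subst h; rw [hfv]; exact Set.mem_insert _ _
    · rw [hfn w h]; rfl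
  let H : SimpleGraph W :=
    { Adj := fun w w' => w ≠ w' ∧ ∃ a ∈ f w, ∃ b ∈ f w', G.Adj a b
      symm := by
        constructor
        rintro w w' ⟨hne, a, ha, b, hb, hab⟩
        exact ⟨hne.symm, b, hb, a, ha, hab.symm⟩
      loopless := ⟨fun w h => h.1 rfl⟩ }
  have hconnS : (G.induce S).Connected := by
    haveI : Nonempty ↥S := ⟨⟨v, Set.mem_insert _ _⟩⟩
    refine ⟨?_⟩
    have key : ∀ c : ↥S, (G.induce S).Reachable c ⟨v, Set.mem_insert _ _⟩ := by
      rintro ⟨x, hx⟩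
      rcases Set.mem_insert_iff.1 hx with rfl | hxI
      · exact SimpleGraph.Reachable.refl _
      · have hadj : (G.induce S).Adj ⟨x, Set.mem_insert_iff.2 (Or.inr hxI)⟩
            ⟨v, Set.mem_insert _ _⟩ := by
          simp only [SimpleGraph.comap_adj, Function.Embedding.coe_subtype]
          exact (hImem x (by exact_mod_cast hxI)).symm
        exact hadj.reachable
    intro a b
    exact (key a).trans (key b).symm
  have hminor : MinorOf H G := by
    refine ⟨f, ?_, ?_, ?_, fun w w' h => h.2⟩
    · intro w; exact ⟨w.val, hmemf w⟩
    · intro w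
      by_cases h : w = vW
      · rw [show f w = S by rw [h]; exact hfv]
        exact hconnS
      · rw [hfn w h]
        haveI : Nonempty ↥({(w.val : V)} : Set V) := ⟨⟨w.val, rfl⟩⟩
        refine ⟨?_⟩
        rintro ⟨a, ha⟩ ⟨b, hb⟩
        rw [Set.mem_singleton_iff] at ha hb
        subst ha; subst hb
        exact SimpleGraph.Reachable.refl _
    · intro w w' hne
      rw [Set.disjoint_left]
      intro x hxw hxw'
      by_cases h : w = vW <;> by_cases h' : w' = vW
      · exact hne (h.trans h'.symm)
      · subst h
        rw [hfn w' h', Set.mem_singleton_iff] at hxw'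
        rw [hfv] at hxw
        subst hxw'
        rcases Set.mem_insert_iff.1 hxw with h1 | h1
        · exact h' (Subtype.ext h1)
        · exact w'.prop (by exact_mod_cast h1)
      · subst h'
        rw [hfn w h, Set.mem_singleton_iff] at hxw
        rw [hfv] at hxw'
        subst hxw
        rcases Set.mem_insert_iff.1 hxw' with h1 | h1
        · exact h (Subtype.ext h1)
        · exact w.prop (by exact_mod_cast h1)
      · rw [hfn w h, Set.mem_singleton_iff] at hxw
        rw [hfn w' h', Set.mem_singleton_iff] at hxw'
        exact hne (Subtype.ext (hxw.symm.trans hxw' ▸ rfl))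
  have hnotiso : IsEmpty (H ≃g G) := by
    constructor
    intro e
    have hcW : Fintype.card W = Fintype.card V - 4 := by
      have h1 : Fintype.card {x : V // x ∈ I} = 4 := by
        rw [Fintype.card_coe]; exact hI4
      have := Fintype.card_subtype_compl (fun x => x ∈ I)
      rw [h1] at this
      exact this
    have h4V : 4 ≤ Fintype.card V := by
      rw [← hI4]; exact Finset.card_le_card (Finset.subset_univ I) |>.trans_eq Finset.card_univ
    have := Fintype.card_congr e.toEquiv
    omega
  have hcol : H.Colorable 7 := hG.2 W (by infer_instance) H hminor hnotiso
  obtain ⟨C⟩ := hcol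
  let g₀ : V → Fin 7 := fun x => if hx : x ∈ I then C vW else C ⟨x, hx⟩
  set T : Finset (Fin 7) := (G.neighborFinset v).image g₀ with hTdef
  have hIsub : I ⊆ G.neighborFinset v := by
    intro x hx; rw [SimpleGraph.mem_neighborFinset]; exact hImem x hx
  have hT6 : T.card ≤ 6 := by
    have hsplit : G.neighborFinset v = I ∪ (G.neighborFinset v \ I) := by
      rw [Finset.union_sdiff_of_subset hIsub]
    have h1 : (I.image g₀).card ≤ 1 := by
      have : I.image g₀ ⊆ {C vW} := by
        intro c hc
        rw [Finset.mem_image] at hc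
        obtain ⟨x, hx, rfl⟩ := hc
        simp [g₀, dif_pos hx]
      exact (Finset.card_le_card this).trans (by simp)
    have h2 : ((G.neighborFinset v \ I).image g₀).card ≤ 5 := by
      refine (Finset.card_image_le).trans ?_
      rw [Finset.card_sdiff_of_subset hIsub, SimpleGraph.card_neighborFinset_eq_degree, hv, hI4]
    have hTeq : T = I.image g₀ ∪ (G.neighborFinset v \ I).image g₀ := by
      rw [hTdef]
      conv_lhs => rw [hsplit]
      rw [Finset.image_union]
    have := Finset.card_union_le (I.image g₀) ((G.neighborFinset v \ I).image g₀)
    rw [hTeq]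
    omega
  obtain ⟨c₀, hc₀⟩ : ∃ c₀ : Fin 7, c₀ ∉ T := by
    by_contra hcc
    push_neg at hcc
    have : (univ : Finset (Fin 7)) ⊆ T := fun c _ => hcc c
    have := Finset.card_le_card this
    simp at this
    omega
  let g : V → Fin 7 := fun x => if x = v then c₀ else g₀ x
  have hvalid : ∀ a b : V, G.Adj a b → g a ≠ g b := by
    intro a b hab heq
    by_cases hav : a = v
    · have hbv : b ≠ v := fun h => G.loopless.irrefl v (by rw [hav, h] at hab; exact hab)
      have hbT : g₀ b ∈ T := Finset.mem_image_of_mem g₀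
        ((SimpleGraph.mem_neighborFinset _ _ _).2 (hav ▸ hab))
      rw [show g a = c₀ from if_pos hav, show g b = g₀ b from if_neg hbv] at heq
      exact hc₀ (heq ▸ hbT)
    · by_cases hbv : b = v
      · have haT : g₀ a ∈ T := Finset.mem_image_of_mem g₀
          ((SimpleGraph.mem_neighborFinset _ _ _).2 (hbv ▸ hab.symm))
        rw [show g a = g₀ a from if_neg hav, show g b = c₀ from if_pos hbv] at heq
        exact hc₀ (heq ▸ haT)
      · rw [show g a = g₀ a from if_neg hav, show g b = g₀ b from if_neg hbv] at heq
        by_cases haI : a ∈ I <;> by_cases hbI : b ∈ I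
        · exact hInon a haI b hbI hab.ne hab
        · have hH : H.Adj vW ⟨b, hbI⟩ := by
            refine ⟨fun h => hbv (congrArg Subtype.val h).symm, a, ?_, b, ?_, hab⟩
            · rw [hfv]
              exact Set.mem_insert_iff.2 (Or.inr (by exact_mod_cast haI))
            · exact hmemf ⟨b, hbI⟩
          rw [show g₀ a = C vW from dif_pos haI, show g₀ b = C ⟨b, hbI⟩ from dif_neg hbI] at heq
          exact C.valid hH heq
        · have hH : H.Adj ⟨a, haI⟩ vW := by
            refine ⟨fun h => hav (congrArg Subtype.val h), a, ?_, b, ?_, hab⟩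
            · exact hmemf ⟨a, haI⟩
            · rw [hfv]
              exact Set.mem_insert_iff.2 (Or.inr (by exact_mod_cast hbI))
          rw [show g₀ a = C ⟨a, haI⟩ from dif_neg haI, show g₀ b = C vW from dif_pos hbI] at heq
          exact C.valid hH heq
        · have hH : H.Adj ⟨a, haI⟩ ⟨b, hbI⟩ :=
            ⟨fun h => hab.ne (congrArg Subtype.val h), a, hmemf ⟨a, haI⟩,
              b, hmemf ⟨b, hbI⟩, hab⟩
          rw [show g₀ a = C ⟨a, haI⟩ from dif_neg haI,
            show g₀ b = C ⟨b, hbI⟩ from dif_neg hbI] at heq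
          exact C.valid hH heq
  have hcol7 : G.Colorable 7 := ⟨SimpleGraph.Coloring.mk g (fun {x y} h => hvalid x y h)⟩
  have hle := hcol7.chromaticNumber_le
  rw [hG.1] at hle
  norm_num at hle
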